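/- Let q = (φ^L)'(λ*) where φ^L(z) = ψ^L(z) + z and λ* > 0. Define p^L_n for n ≥ 2 by p^L_n = (1/(λ* q))(β(λ*)² 1_{n=2} + ∫₀^∞ ((yλ*)^n / n!) e^{-λ* y} Π^L(dy)), p^L_0 = p^L_1 = 0, and p^{NL}_n for n ≥ 1 by p^{NL}_n = (1/(λ* q))(λ* γ 1_{n=1} + ∫₀^∞ ((yλ*)^n / n!) e^{-λ* y} Π^{NL}(dy)), p^{NL}_0 = 0. If ψ̄(λ*) = 0 (where ψ̄ is the total-mass branching mechanism), then Σ_{n≥0} (p^L_n + p^{NL}_n) = 1. -/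

import Mathlib

open MeasureTheory Real Set
open scoped ENNReal NNReal

private lemma my_exp_tsum (x : ℝ) : Real.exp x = ∑' n : ℕ, x ^ n / n.factorial := by
  rw [Real.exp_eq_exp_ℝ, NormedSpace.exp_eq_tsum_div]

private lemma my_tail (x : ℝ) (k : ℕ) :
    ∑' n : ℕ, x ^ (n + k) / ((n + k).factorial : ℝ)
      = Real.exp x - ∑ i ∈ Finset.range k, x ^ i / i.factorial := by
  have hs := Real.summable_pow_div_factorial x
  have h := hs.sum_add_tsum_nat_add k
  rw [← my_exp_tsum] at h
  linarith

private lemma my_one_sub_exp_le (x : ℝ) : 1 - Real.exp (-x) ≤ x := by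
  linarith [Real.add_one_le_exp (-x)]

private lemma my_one_sub_exp_nonneg (x : ℝ) (hx : 0 ≤ x) : 0 ≤ 1 - Real.exp (-x) := by
  have : Real.exp (-x) ≤ Real.exp 0 := Real.exp_le_exp.mpr (by linarith)
  simp only [Real.exp_zero] at this; linarith

private lemma my_g2_nonneg (x : ℝ) : 0 ≤ Real.exp (-x) - 1 + x := by
  linarith [Real.add_one_le_exp (-x)]

private lemma my_g2_le_sq (x : ℝ) (hx : 0 ≤ x) : Real.exp (-x) - 1 + x ≤ x ^ 2 := by
  have h1 : Real.exp (-x) * Real.exp x = 1 := by rw [← Real.exp_add]; simp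
  have h2 : x + 1 ≤ Real.exp x := Real.add_one_le_exp x
  nlinarith [Real.exp_pos (-x), Real.exp_pos x, sq_nonneg x, mul_nonneg hx (mul_nonneg hx hx)]

private lemma my_key (μ : Measure ℝ) (l : ℝ) (hl : 0 < l) (k : ℕ) (h : ℝ → ℝ)
    (hhi : IntegrableOn h (Set.Ioi 0) μ)
    (hbound : ∀ y ∈ Set.Ioi (0:ℝ),
      (Real.exp (y * l) - ∑ i ∈ Finset.range k, (y * l) ^ i / i.factorial)
        * Real.exp (-(l * y)) ≤ h y) :
    HasSum (fun n : ℕ => ∫ y in Set.Ioi (0:ℝ),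
        ((y * l) ^ (n + k) / ((n + k).factorial : ℝ)) * Real.exp (-(l * y)) ∂μ)
      (∫ y in Set.Ioi (0:ℝ),
        (Real.exp (y * l) - ∑ i ∈ Finset.range k, (y * l) ^ i / i.factorial)
          * Real.exp (-(l * y)) ∂μ) := by
  set f : ℕ → ℝ → ℝ := fun n y =>
    ((y * l) ^ (n + k) / ((n + k).factorial : ℝ)) * Real.exp (-(l * y)) with hf
  have hcont : ∀ n, Continuous (f n) := by
    intro n
    exact (((continuous_id.mul continuous_const).pow _).div_const _).mul
      (Real.continuous_exp.comp ((continuous_const.mul continuous_id).neg))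
  have hmeas : ∀ n, AEStronglyMeasurable (f n) (μ.restrict (Set.Ioi 0)) :=
    fun n => (hcont n).aestronglyMeasurable
  have hnn : ∀ n, ∀ y ∈ Set.Ioi (0:ℝ), 0 ≤ f n y := by
    intro n y hy
    have : (0:ℝ) < y * l := mul_pos hy hl
    positivity
  have hpt : ∀ y, ∑' n, f n y
      = (Real.exp (y * l) - ∑ i ∈ Finset.range k, (y * l) ^ i / i.factorial)
        * Real.exp (-(l * y)) := by
    intro y
    rw [hf]
    rw [tsum_mul_right, my_tail]
  have hsum_pt : ∀ y : ℝ, Summable fun n => f n y := by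
    intro y
    exact (summable_nat_add_iff k).mpr
      ((Real.summable_pow_div_factorial (y * l)).mul_right _)
  have hfin : (∑' n, ∫⁻ y, (‖f n y‖₊ : ℝ≥0∞) ∂(μ.restrict (Set.Ioi 0))) ≠ ⊤ := by
    have h1 : ∀ n, ∫⁻ y, (‖f n y‖₊ : ℝ≥0∞) ∂(μ.restrict (Set.Ioi 0))
        = ∫⁻ y, ENNReal.ofReal (f n y) ∂(μ.restrict (Set.Ioi 0)) := by
      intro n
      apply lintegral_congr_ae
      filter_upwards [ae_restrict_mem measurableSet_Ioi] with y hy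
      exact Real.enorm_eq_ofReal (hnn n y hy)
    have h2 : ∑' n, ∫⁻ y, ENNReal.ofReal (f n y) ∂(μ.restrict (Set.Ioi 0))
        = ∫⁻ y, ∑' n, ENNReal.ofReal (f n y) ∂(μ.restrict (Set.Ioi 0)) :=
      (lintegral_tsum (fun n => ((hcont n).measurable.ennreal_ofReal).aemeasurable)).symm
    have h3 : ∫⁻ y, ∑' n, ENNReal.ofReal (f n y) ∂(μ.restrict (Set.Ioi 0))
        ≤ ∫⁻ y, (‖h y‖₊ : ℝ≥0∞) ∂(μ.restrict (Set.Ioi 0)) := by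
      apply lintegral_mono_ae
      filter_upwards [ae_restrict_mem measurableSet_Ioi] with y hy
      rw [← ENNReal.ofReal_tsum_of_nonneg (fun n => hnn n y hy) (hsum_pt y), hpt y]
      exact (ENNReal.ofReal_le_ofReal (hbound y hy)).trans (Real.ofReal_le_enorm _)
    have h4 : ∫⁻ y, (‖h y‖₊ : ℝ≥0∞) ∂(μ.restrict (Set.Ioi 0)) < ⊤ :=
      hhi.hasFiniteIntegral
    simp only [h1]
    rw [h2]
    exact (h3.trans_lt h4).ne
  have hint := integral_tsum hmeas hfin
  have htsum_eq : ∑' n, ∫ y in Set.Ioi (0:ℝ), f n y ∂μ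
      = ∫ y in Set.Ioi (0:ℝ),
        (Real.exp (y * l) - ∑ i ∈ Finset.range k, (y * l) ^ i / i.factorial)
          * Real.exp (-(l * y)) ∂μ := by
    rw [← hint]
    apply integral_congr_ae
    filter_upwards with y using hpt y
  have hsummable : Summable fun n => ∫ y in Set.Ioi (0:ℝ), f n y ∂μ := by
    have heq : ∀ n, ∫ y in Set.Ioi (0:ℝ), f n y ∂μ
        = (∫⁻ y, ENNReal.ofReal (f n y) ∂(μ.restrict (Set.Ioi 0))).toReal := by
      intro n
      apply integral_eq_lintegral_of_nonneg_ae
      · filter_upwards [ae_restrict_mem measurableSet_Ioi] with y hy using hnn n y hy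
      · exact hmeas n
    have h1 : ∀ n, ∫⁻ y, ENNReal.ofReal (f n y) ∂(μ.restrict (Set.Ioi 0))
        = ∫⁻ y, (‖f n y‖₊ : ℝ≥0∞) ∂(μ.restrict (Set.Ioi 0)) := by
      intro n
      apply lintegral_congr_ae
      filter_upwards [ae_restrict_mem measurableSet_Ioi] with y hy
      exact (Real.enorm_eq_ofReal (hnn n y hy)).symm
    have := ENNReal.summable_toReal hfin
    apply Summable.congr this
    intro n
    rw [heq n, h1 n]
  exact hsummable.hasSum_iff.mpr htsum_eq

private lemma my_int_g1 (μ : Measure ℝ) (l : ℝ) (hl : 0 < l)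
    (hμ : IntegrableOn (fun u => min u (u ^ 2)) (Set.Ioi 0) μ) :
    IntegrableOn (fun u => u * (1 - Real.exp (-(l * u)))) (Set.Ioi 0) μ := by
  apply Integrable.mono' (hμ.const_mul (max 1 l))
    ((continuous_id.mul (continuous_const.sub
      (Real.continuous_exp.comp ((continuous_const.mul continuous_id).neg)))).aestronglyMeasurable)
  filter_upwards [ae_restrict_mem measurableSet_Ioi] with u hu
  have hu0 : (0:ℝ) < u := hu
  have h1 : 1 - Real.exp (-(l * u)) ≤ l * u := my_one_sub_exp_le _
  have h2 : 0 ≤ 1 - Real.exp (-(l * u)) := my_one_sub_exp_nonneg _ (by positivity)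
  have h3 : Real.exp (-(l * u)) > 0 := Real.exp_pos _
  simp only [Pi.mul_apply, Pi.sub_apply, Pi.add_apply, Pi.neg_apply, id_eq, Function.comp_apply, Real.norm_eq_abs]
  rw [abs_of_nonneg (mul_nonneg hu0.le h2)]
  rcases le_total u 1 with hc | hc
  · have hm : min u (u ^ 2) = u ^ 2 := min_eq_right (by nlinarith)
    rw [hm]; nlinarith [le_max_right 1 l, le_max_left (1:ℝ) l]
  · have hm : min u (u ^ 2) = u := min_eq_left (by nlinarith)
    rw [hm]; nlinarith [le_max_left (1:ℝ) l, le_max_right (1:ℝ) l]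

private lemma my_int_g2 (μ : Measure ℝ) (l : ℝ) (hl : 0 < l)
    (hμ : IntegrableOn (fun u => min u (u ^ 2)) (Set.Ioi 0) μ) :
    IntegrableOn (fun u => Real.exp (-(l * u)) - 1 + l * u) (Set.Ioi 0) μ := by
  apply Integrable.mono' (hμ.const_mul (max l (l ^ 2)))
    (((Real.continuous_exp.comp ((continuous_const.mul continuous_id).neg)).sub
      continuous_const).add (continuous_const.mul continuous_id)).aestronglyMeasurable
  filter_upwards [ae_restrict_mem measurableSet_Ioi] with u hu
  have hu0 : (0:ℝ) < u := hu
  have h0 : 0 ≤ Real.exp (-(l * u)) - 1 + l * u := my_g2_nonneg _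
  have h1 : Real.exp (-(l * u)) - 1 + l * u ≤ (l * u) ^ 2 := my_g2_le_sq _ (by positivity)
  have h2 : Real.exp (-(l * u)) ≤ 1 := by
    have := my_one_sub_exp_nonneg (l * u) (by positivity); linarith
  simp only [Pi.mul_apply, Pi.sub_apply, Pi.add_apply, Pi.neg_apply, id_eq, Function.comp_apply, Real.norm_eq_abs]
  rw [abs_of_nonneg h0]
  rcases le_total u 1 with hc | hc
  · have hm : min u (u ^ 2) = u ^ 2 := min_eq_right (by nlinarith)
    rw [hm]
    have : (l * u) ^ 2 ≤ max l (l ^ 2) * u ^ 2 := by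
      have := le_max_right l (l ^ 2); nlinarith [sq_nonneg u]
    linarith
  · have hm : min u (u ^ 2) = u := min_eq_left (by nlinarith)
    rw [hm]
    have : Real.exp (-(l * u)) - 1 + l * u ≤ l * u := by linarith
    have : l * u ≤ max l (l ^ 2) * u := by
      have := le_max_left l (l ^ 2); nlinarith
    linarith

private lemma my_int_g3 (μ : Measure ℝ) (l : ℝ) (hl : 0 < l)
    (hμ : IntegrableOn (fun u => u) (Set.Ioi 0) μ) :
    IntegrableOn (fun u => 1 - Real.exp (-(l * u))) (Set.Ioi 0) μ := by
  apply Integrable.mono' (hμ.const_mul l)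
    ((continuous_const.sub
      (Real.continuous_exp.comp ((continuous_const.mul continuous_id).neg))).aestronglyMeasurable)
  filter_upwards [ae_restrict_mem measurableSet_Ioi] with u hu
  have hu0 : (0:ℝ) < u := hu
  have h1 : 1 - Real.exp (-(l * u)) ≤ l * u := my_one_sub_exp_le _
  have h2 : 0 ≤ 1 - Real.exp (-(l * u)) := my_one_sub_exp_nonneg _ (by positivity)
  simp only [Pi.mul_apply, Pi.sub_apply, Pi.add_apply, Pi.neg_apply, id_eq, Function.comp_apply, Real.norm_eq_abs]
  rw [abs_of_nonneg h2]
  exact h1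

/-- The backbone local and non-local offspring probabilities sum to one when `λ*` is a
root of the total-mass branching mechanism `ψ̄`. -/
theorem offspring_probabilities_sum_to_one
    (α β γ lstar q : ℝ) (hβ : 0 ≤ β) (hγ : 0 ≤ γ) (hlstar : 0 < lstar) (hq : 0 < q)
    (PiL PiNL : Measure ℝ)
    (hPiL : IntegrableOn (fun u => min u (u ^ 2)) (Set.Ioi 0) PiL)
    (hPiNL : IntegrableOn (fun u => u) (Set.Ioi 0) PiNL)
    (hconstraint : γ + ∫ u in Set.Ioi (0 : ℝ), u ∂PiNL ≤ 1)
    -- `q = (φ^L)'(λ*) = (ψ^L)'(λ*) + 1`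
    (hq_def : q = α + 2 * β * lstar +
      (∫ u in Set.Ioi (0 : ℝ), u * (1 - Real.exp (-(lstar * u))) ∂PiL) + 1)
    -- `ψ̄(λ*) = 0`
    (hroot : (α + 1) * lstar + β * lstar ^ 2 +
      (∫ u in Set.Ioi (0 : ℝ), (Real.exp (-(lstar * u)) - 1 + lstar * u) ∂PiL) -
      γ * lstar - (∫ u in Set.Ioi (0 : ℝ), (1 - Real.exp (-(lstar * u))) ∂PiNL) = 0)
    (pL pNL : ℕ → ℝ)
    (hpL0 : pL 0 = 0) (hpL1 : pL 1 = 0)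
    (hpL : ∀ n : ℕ, 2 ≤ n → pL n = (1 / (lstar * q)) *
      (β * lstar ^ 2 * (if n = 2 then 1 else 0) +
        ∫ y in Set.Ioi (0 : ℝ), ((y * lstar) ^ n / n.factorial) * Real.exp (-(lstar * y)) ∂PiL))
    (hpNL0 : pNL 0 = 0)
    (hpNL : ∀ n : ℕ, 1 ≤ n → pNL n = (1 / (lstar * q)) *
      (lstar * γ * (if n = 1 then 1 else 0) +
        ∫ y in Set.Ioi (0 : ℝ), ((y * lstar) ^ n / n.factorial) * Real.exp (-(lstar * y)) ∂PiNL)) :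
    ∑' n : ℕ, (pL n + pNL n) = 1 := by
  set c : ℝ := 1 / (lstar * q) with hc
  set J : ℝ := ∫ u in Set.Ioi (0 : ℝ), u * (1 - Real.exp (-(lstar * u))) ∂PiL with hJ
  set K : ℝ := ∫ u in Set.Ioi (0 : ℝ), (Real.exp (-(lstar * u)) - 1 + lstar * u) ∂PiL with hK
  set B : ℝ := ∫ u in Set.Ioi (0 : ℝ), (1 - Real.exp (-(lstar * u))) ∂PiNL with hB
  -- local part: interchange sum and integral
  have hg1 := my_int_g1 PiL lstar hlstar hPiL
  have hg2 := my_int_g2 PiL lstar hlstar hPiL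
  have hg3 := my_int_g3 PiNL lstar hlstar hPiNL
  have hboundL : ∀ y ∈ Set.Ioi (0:ℝ),
      (Real.exp (y * lstar) - ∑ i ∈ Finset.range 2, (y * lstar) ^ i / i.factorial)
        * Real.exp (-(lstar * y)) ≤ lstar * (y * (1 - Real.exp (-(lstar * y)))) := by
    intro y hy
    have hy0 : (0:ℝ) < y := hy
    have h1 : Real.exp (y * lstar) * Real.exp (-(lstar * y)) = 1 := by
      rw [← Real.exp_add]; ring_nf; exact Real.exp_zero
    have h2 : 1 - Real.exp (-(lstar * y)) ≤ lstar * y := my_one_sub_exp_le _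
    simp only [Finset.sum_range_succ, Finset.sum_range_zero]
    norm_num
    nlinarith [Real.exp_pos (-(lstar * y))]
  have hL := my_key PiL lstar hlstar 2
    (fun y => lstar * (y * (1 - Real.exp (-(lstar * y))))) (hg1.const_mul lstar) hboundL
  have hboundNL : ∀ y ∈ Set.Ioi (0:ℝ),
      (Real.exp (y * lstar) - ∑ i ∈ Finset.range 1, (y * lstar) ^ i / i.factorial)
        * Real.exp (-(lstar * y)) ≤ 1 - Real.exp (-(lstar * y)) := by
    intro y hy
    have h1 : Real.exp (y * lstar) * Real.exp (-(lstar * y)) = 1 := by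
      rw [← Real.exp_add]; ring_nf; exact Real.exp_zero
    simp only [Finset.sum_range_succ, Finset.sum_range_zero]
    norm_num
    nlinarith [Real.exp_pos (-(lstar * y))]
  have hNL := my_key PiNL lstar hlstar 1
    (fun y => 1 - Real.exp (-(lstar * y))) hg3 hboundNL
  -- identify the limits
  have hSL : (∫ y in Set.Ioi (0:ℝ),
      (Real.exp (y * lstar) - ∑ i ∈ Finset.range 2, (y * lstar) ^ i / i.factorial)
        * Real.exp (-(lstar * y)) ∂PiL) = lstar * J - K := by
    have heq : (fun y : ℝ =>
        (Real.exp (y * lstar) - ∑ i ∈ Finset.range 2, (y * lstar) ^ i / i.factorial)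
          * Real.exp (-(lstar * y)))
        = fun y : ℝ => lstar * (y * (1 - Real.exp (-(lstar * y))))
          - (Real.exp (-(lstar * y)) - 1 + lstar * y) := by
      funext y
      have h1 : Real.exp (y * lstar) * Real.exp (-(lstar * y)) = 1 := by
        rw [← Real.exp_add]; ring_nf; exact Real.exp_zero
      simp only [Finset.sum_range_succ, Finset.sum_range_zero]
      norm_num
      linear_combination h1
    rw [heq, integral_sub (hg1.const_mul lstar) hg2, integral_const_mul, hJ, hK]
  have hSNL : (∫ y in Set.Ioi (0:ℝ),
      (Real.exp (y * lstar) - ∑ i ∈ Finset.range 1, (y * lstar) ^ i / i.factorial)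
        * Real.exp (-(lstar * y)) ∂PiNL) = B := by
    have heq : (fun y : ℝ =>
        (Real.exp (y * lstar) - ∑ i ∈ Finset.range 1, (y * lstar) ^ i / i.factorial)
          * Real.exp (-(lstar * y)))
        = fun y : ℝ => 1 - Real.exp (-(lstar * y)) := by
      funext y
      have h1 : Real.exp (y * lstar) * Real.exp (-(lstar * y)) = 1 := by
        rw [← Real.exp_add]; ring_nf; exact Real.exp_zero
      simp only [Finset.sum_range_succ, Finset.sum_range_zero]
      norm_num
      linear_combination h1
    rw [heq, hB]
  rw [hSL] at hL
  rw [hSNL] at hNL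
  -- shifted pL sums
  have hpL2 : (fun n : ℕ => pL (n + 2))
      = fun n : ℕ => c * ((if n = 0 then β * lstar ^ 2 else 0)
        + ∫ y in Set.Ioi (0 : ℝ),
            ((y * lstar) ^ (n + 2) / ((n + 2).factorial : ℝ)) * Real.exp (-(lstar * y)) ∂PiL) := by
    funext n
    rw [hpL (n + 2) (by omega)]
    have : (if n + 2 = 2 then (1:ℝ) else 0) = if n = 0 then 1 else 0 := by
      simp [show (n + 2 = 2) ↔ (n = 0) by omega]
    rw [this]
    rcases Nat.eq_zero_or_pos n with h | h <;> simp [h] <;> ring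
  have hSumL2 : HasSum (fun n : ℕ => pL (n + 2)) (c * (β * lstar ^ 2 + (lstar * J - K))) := by
    rw [hpL2]
    exact (((hasSum_ite_eq 0 (β * lstar ^ 2)).add hL)).mul_left c
  have hSummableL : Summable pL := (summable_nat_add_iff 2).mp hSumL2.summable
  have htsumL : ∑' n, pL n = c * (β * lstar ^ 2 + (lstar * J - K)) := by
    have h := hSummableL.sum_add_tsum_nat_add 2
    rw [← h, hSumL2.tsum_eq]
    simp [Finset.sum_range_succ, hpL0, hpL1]
  -- shifted pNL sums
  have hpNL1 : (fun n : ℕ => pNL (n + 1))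
      = fun n : ℕ => c * ((if n = 0 then lstar * γ else 0)
        + ∫ y in Set.Ioi (0 : ℝ),
            ((y * lstar) ^ (n + 1) / ((n + 1).factorial : ℝ)) * Real.exp (-(lstar * y)) ∂PiNL) := by
    funext n
    rw [hpNL (n + 1) (by omega)]
    have : (if n + 1 = 1 then (1:ℝ) else 0) = if n = 0 then 1 else 0 := by
      simp [show (n + 1 = 1) ↔ (n = 0) by omega]
    rw [this]
    rcases Nat.eq_zero_or_pos n with h | h <;> simp [h] <;> ring
  have hSumNL1 : HasSum (fun n : ℕ => pNL (n + 1)) (c * (lstar * γ + B)) := by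
    rw [hpNL1]
    exact (((hasSum_ite_eq 0 (lstar * γ)).add hNL)).mul_left c
  have hSummableNL : Summable pNL := (summable_nat_add_iff 1).mp hSumNL1.summable
  have htsumNL : ∑' n, pNL n = c * (lstar * γ + B) := by
    have h := hSummableNL.sum_add_tsum_nat_add 1
    rw [← h, hSumNL1.tsum_eq]
    simp [Finset.sum_range_succ, hpNL0]
  -- assemble
  rw [hSummableL.tsum_add hSummableNL, htsumL, htsumNL]
  have key : β * lstar ^ 2 + (lstar * J - K) + (lstar * γ + B) = lstar * q := by
    linear_combination (-lstar) * hq_def - hroot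
  have hlq : lstar * q ≠ 0 := by positivity
  rw [← mul_add, key, hc]
  field_simp
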